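/- Every cycle of length 4 in the graph V8 has vertex set of the form {i, i+1, i+4, i+5} for some i ∈ ℤ/8ℤ; that is, if v0, v1, v2, v3 are distinct vertices of ℤ/8ℤ with v_t adjacent to v_{t+1 (mod 4)} in V8 for all t, then there exists i ∈ ℤ/8ℤ with {v0, v1, v2, v3} = {i, i+1, i+4, i+5}. -/
import Mathlib


/-- Adjacency in `V₈`, the four-rung Möbius ladder: `j` is adjacent to `j - 1`,
`j + 1` and `j + 4` (mod 8). -/
def V8Adj (i j : ZMod 8) : Prop := j = i + 1 ∨ i = j + 1 ∨ j = i + 4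

instance : DecidablePred (fun p : ZMod 8 × ZMod 8 => V8Adj p.1 p.2) := by
  intro p; unfold V8Adj; infer_instance

instance (i j : ZMod 8) : Decidable (V8Adj i j) := by
  unfold V8Adj; infer_instance

lemma key (a b c d : ZMod 8) (h1 : a ≠ b) (h2 : a ≠ c) (h3 : a ≠ d)
    (h4 : b ≠ c) (h5 : b ≠ d) (h6 : c ≠ d)
    (e1 : V8Adj a b) (e2 : V8Adj b c) (e3 : V8Adj c d) (e4 : V8Adj d a) :
    ∃ i : ZMod 8, ({a, b, c, d} : Finset (ZMod 8)) = {i, i + 1, i + 4, i + 5} := by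
  revert h1 h2 h3 h4 h5 h6 e1 e2 e3 e4
  revert a b c d
  decide

/-- Every cycle of length 4 in the graph `V₈` has vertex set of the form
`{i, i+1, i+4, i+5}` for some `i`. -/
theorem v8_four_cycle_support
    (f : ZMod 4 → ZMod 8) (hinj : Function.Injective f)
    (hadj : ∀ t : ZMod 4, V8Adj (f t) (f (t + 1))) :
    ∃ i : ZMod 8, Set.range f = ({i, i + 1, i + 4, i + 5} : Set (ZMod 8)) := by
  have h01 : f 0 ≠ f 1 := fun h => by have := hinj h; revert this; decide
  have h02 : f 0 ≠ f 2 := fun h => by have := hinj h; revert this; decide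
  have h03 : f 0 ≠ f 3 := fun h => by have := hinj h; revert this; decide
  have h12 : f 1 ≠ f 2 := fun h => by have := hinj h; revert this; decide
  have h13 : f 1 ≠ f 3 := fun h => by have := hinj h; revert this; decide
  have h23 : f 2 ≠ f 3 := fun h => by have := hinj h; revert this; decide
  have e1 := hadj 0
  have e2 := hadj 1
  have e3 := hadj 2
  have e4 := hadj 3
  norm_num at e1 e2 e3 e4
  obtain ⟨i, hi⟩ := key (f 0) (f 1) (f 2) (f 3) h01 h02 h03 h12 h13 h23 e1 e2 e3 e4
  refine ⟨i, ?_⟩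
  have hrange : Set.range f = {f 0, f 1, f 2, f 3} := by
    ext x
    constructor
    · rintro ⟨t, rfl⟩
      have : t = 0 ∨ t = 1 ∨ t = 2 ∨ t = 3 := by revert t; decide
      rcases this with rfl | rfl | rfl | rfl <;> simp
    · rintro (rfl | rfl | rfl | rfl) <;> exact ⟨_, rfl⟩
  rw [hrange]
  have := congrArg (fun s : Finset (ZMod 8) => (s : Set (ZMod 8))) hi
  simpa using this
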